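/- arXiv:1807.02833 — 3 statements merged into one kernel-verified Lean document; each statement's English description precedes it below -/
import Mathlib

section
/- For complex numbers α, β with Re(α) < 1/2 and Re(β) < 1/2, the double integral ∫_{ℝ²} exp(-x²/2 - y²/2) · ((x-y)/(x+y)) · (exp(αx² + βy²) - exp(αy² + βx²)) dx dy equals 4π(α - β) / ((1 - α - β)·√(1 - 2α)·√(1 - 2β)). -/
open MeasureTheory Filter Set Complex Real

lemma norm_exp_sub_exp_neg_le (w : ℂ) :
    ‖Complex.exp w - Complex.exp (-w)‖ ≤ 2 * ‖w‖ * Real.exp |w.re| := by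
  set s : Set ℂ := {z : ℂ | z.re ∈ Icc (-|w.re|) |w.re|} with hs
  have hconv : Convex ℝ s := (convex_Icc _ _).linear_preimage Complex.reLm
  have hdiff : ∀ z ∈ s, DifferentiableAt ℝ Complex.exp z := fun z _ =>
    DifferentiableAt.restrictScalars ℝ (𝕜' := ℂ) (Complex.differentiable_exp z)
  have hbound : ∀ z ∈ s, ‖fderiv ℝ Complex.exp z‖ ≤ Real.exp |w.re| := by
    intro z hz
    have hd : HasFDerivAt Complex.exp
        ((ContinuousLinearMap.smulRight (1 : ℂ →L[ℂ] ℂ) (Complex.exp z)).restrictScalars ℝ) z :=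
      ((Complex.hasDerivAt_exp z).hasFDerivAt).restrictScalars ℝ
    rw [hd.fderiv, ContinuousLinearMap.norm_restrictScalars]
    calc ‖(ContinuousLinearMap.smulRight (1 : ℂ →L[ℂ] ℂ) (Complex.exp z))‖
        ≤ ‖(1 : ℂ →L[ℂ] ℂ)‖ * ‖Complex.exp z‖ :=
          (ContinuousLinearMap.norm_smulRight_apply _ _).le
      _ ≤ 1 * Real.exp |w.re| := by
          apply mul_le_mul
          · rw [ContinuousLinearMap.one_def]; exact ContinuousLinearMap.norm_id_le
          · rw [Complex.norm_exp]
            exact Real.exp_le_exp.2 hz.2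
          · positivity
          · norm_num
      _ = Real.exp |w.re| := one_mul _
  have h1 : w ∈ s := by simp [hs, neg_abs_le, le_abs_self]
  have h2 : -w ∈ s := by
    simp only [hs, mem_setOf_eq, Complex.neg_re, mem_Icc, neg_le_neg_iff]
    constructor
    · exact le_abs_self _
    · exact neg_le_abs _
  calc ‖Complex.exp w - Complex.exp (-w)‖
      ≤ Real.exp |w.re| * ‖w - -w‖ :=
        hconv.norm_image_sub_le_of_norm_fderiv_le hdiff hbound h2 h1
    _ = 2 * ‖w‖ * Real.exp |w.re| := by
        rw [sub_neg_eq_add, ← two_mul]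
        rw [show (2:ℂ) * w = (2:ℝ) • w by rw [real_smul]; push_cast; ring]
        rw [norm_smul]
        simp only [Real.norm_ofNat]
        ring

lemma re_mul_div_add_pos {p q : ℂ} (hp : 0 < p.re) (hq : 0 < q.re) :
    0 < (p * q / (p + q)).re := by
  rw [Complex.div_re]
  have hns : 0 < Complex.normSq (p + q) := by
    rw [Complex.normSq_pos]
    intro h
    have := congrArg Complex.re h
    simp only [Complex.add_re, Complex.zero_re] at this
    linarith
  rw [← add_div]
  apply div_pos _ hns
  simp only [Complex.mul_re, Complex.mul_im, Complex.add_re, Complex.add_im]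
  nlinarith [sq_nonneg p.im, sq_nonneg q.im, mul_pos hp hq]

lemma arg_abs_lt_half_pi {z : ℂ} (hz : 0 < z.re) : |z.arg| < π / 2 :=
  Complex.abs_arg_lt_pi_div_two_iff.2 (Or.inl hz)

lemma sqrt_mul' {z w : ℂ} (hz : 0 < z.re) (hw : 0 < w.re) :
    (z * w) ^ (1/2 : ℂ) = z ^ (1/2 : ℂ) * w ^ (1/2 : ℂ) := by
  have hz0 : z ≠ 0 := fun h => by simp [h] at hz
  have hw0 : w ≠ 0 := fun h => by simp [h] at hw
  have hzw0 : z * w ≠ 0 := mul_ne_zero hz0 hw0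
  have hargz := arg_abs_lt_half_pi hz
  have hargw := arg_abs_lt_half_pi hw
  have hmem : z.arg + w.arg ∈ Ioc (-π) π := by
    rw [abs_lt] at hargz hargw
    constructor <;> [linarith [Real.pi_pos]; linarith [Real.pi_pos]]
  rw [Complex.cpow_def_of_ne_zero hzw0, Complex.cpow_def_of_ne_zero hz0,
    Complex.cpow_def_of_ne_zero hw0, Complex.log_mul hz0 hw0 hmem, ← Complex.exp_add]
  ring_nf

lemma arg_mul_ne_pi {z w : ℂ} (hz : 0 < z.re) (hw : 0 < w.re) : (z * w).arg ≠ π := by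
  have hz0 : z ≠ 0 := fun h => by simp [h] at hz
  have hw0 : w ≠ 0 := fun h => by simp [h] at hw
  have hargz := arg_abs_lt_half_pi hz
  have hargw := arg_abs_lt_half_pi hw
  rw [abs_lt] at hargz hargw
  have hmem : z.arg + w.arg ∈ Ioc (-π) π :=
    ⟨by linarith [Real.pi_pos], by linarith [Real.pi_pos]⟩
  rw [Complex.arg_mul hz0 hw0 hmem]
  intro h
  linarith [Real.pi_pos]

lemma ofReal_mul_sqrt {r : ℝ} (hr : 0 < r) {t : ℂ} (ht : t ≠ 0) :
    ((r : ℂ) * t) ^ (1/2 : ℂ) = (Real.sqrt r : ℂ) * t ^ (1/2 : ℂ) := by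
  have h0 : (r:ℂ) * t ≠ 0 := mul_ne_zero (by exact_mod_cast hr.ne') ht
  rw [Complex.cpow_def_of_ne_zero h0, Complex.cpow_def_of_ne_zero ht,
    Complex.log_ofReal_mul hr ht, add_mul, Complex.exp_add]
  congr 1
  rw [show (Real.log r : ℂ) * (1/2) = ((Real.log r / 2 : ℝ) : ℂ) by push_cast; ring,
    ← Complex.ofReal_exp]
  congr 1
  rw [Real.sqrt_eq_rpow, Real.rpow_def_of_pos hr]
  ring_nf

lemma quad_re (b c : ℂ) (v : ℝ) : (b * (v:ℂ) ^ 2 + c * v).re = b.re * v ^ 2 + c.re * v := by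
  simp [pow_two, Complex.add_re, Complex.mul_re, Complex.mul_im]

lemma quad_bound {br : ℝ} (hbr : br < 0) (cr v : ℝ) :
    br * v ^ 2 + cr * v ≤ br / 2 * v ^ 2 + cr ^ 2 / (-2 * br) := by
  have hne : br ≠ 0 := ne_of_lt hbr
  have e : br/2*(v + cr/br)^2 = br/2*v^2 + cr*v + cr^2/(2*br) := by field_simp; ring
  have h2 : br/2*(v + cr/br)^2 ≤ 0 :=
    mul_nonpos_of_nonpos_of_nonneg (by linarith) (sq_nonneg _)
  have e2 : cr^2/(-2*br) = -(cr^2/(2*br)) := by rw [show (-2*br) = -(2*br) by ring, div_neg]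
  linarith

lemma integrable_id_mul_cexp {b : ℂ} (hb : b.re < 0) (c : ℂ) :
    Integrable fun v : ℝ => (v : ℂ) * Complex.exp (b * v ^ 2 + c * v) := by
  have hb2 : (0:ℝ) < -(b.re / 2) := by linarith
  set M : ℝ := Real.exp (c.re ^ 2 / (-2 * b.re)) with hM
  have hbound : ∀ v : ℝ, ‖(v : ℂ) * Complex.exp (b * v ^ 2 + c * v)‖ ≤
      M * (|v| * Real.exp (-(-(b.re / 2)) * v ^ 2)) := by
    intro v
    rw [norm_mul, Complex.norm_exp, quad_re]
    rw [Complex.norm_real, Real.norm_eq_abs]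
    have hexp : Real.exp (b.re * v ^ 2 + c.re * v) ≤
        M * Real.exp (-(-(b.re / 2)) * v ^ 2) := by
      rw [hM, ← Real.exp_add]
      apply Real.exp_le_exp.2
      linarith [quad_bound hb c.re v]
    calc |v| * Real.exp (b.re * v ^ 2 + c.re * v)
        ≤ |v| * (M * Real.exp (-(-(b.re / 2)) * v ^ 2)) :=
          mul_le_mul_of_nonneg_left hexp (by positivity)
      _ = M * (|v| * Real.exp (-(-(b.re / 2)) * v ^ 2)) := by ring
  have hint0 : Integrable fun v : ℝ => |v| * Real.exp (-(-(b.re / 2)) * v ^ 2) := by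
    have := (integrable_rpow_mul_exp_neg_mul_sq hb2 (by norm_num : (-1:ℝ) < 1)).abs
    apply this.congr
    apply Filter.EventuallyEq.of_eq
    funext v
    rw [abs_mul, Real.abs_exp, Real.rpow_one]
  have hint : Integrable fun v : ℝ => M * (|v| * Real.exp (-(-(b.re / 2)) * v ^ 2)) :=
    hint0.const_mul M
  apply hint.mono' ?_ (Filter.Eventually.of_forall hbound)
  apply Measurable.aestronglyMeasurable
  exact (Complex.measurable_ofReal).mul <| Complex.measurable_exp.comp <| by fun_prop

lemma tendsto_cexp_quad {b : ℂ} (hb : b.re < 0) (c : ℂ) {l : Filter ℝ}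
    (hl : Tendsto (fun v : ℝ => v ^ 2) l atTop) :
    Tendsto (fun v : ℝ => Complex.exp (b * v ^ 2 + c * v)) l (nhds 0) := by
  set K : ℝ := c.re ^ 2 / (-2 * b.re) with hK
  have h0' : Tendsto (fun v : ℝ => Real.exp (b.re / 2 * v ^ 2)) l (nhds 0) :=
    Real.tendsto_exp_atBot.comp
      (Tendsto.neg_mul_atTop (by linarith : b.re / 2 < 0) tendsto_const_nhds hl)
  have h0 : Tendsto (fun v : ℝ => Real.exp K * Real.exp (b.re / 2 * v ^ 2)) l (nhds 0) := by
    simpa using h0'.const_mul (Real.exp K)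
  apply squeeze_zero_norm _ h0
  intro v
  rw [Complex.norm_exp, quad_re, ← Real.exp_add]
  exact Real.exp_le_exp.2 (by linarith [quad_bound hb c.re v])

lemma integral_id_mul_cexp {b : ℂ} (hb : b.re < 0) (c : ℂ) :
    ∫ v : ℝ, (v : ℂ) * Complex.exp (b * v ^ 2 + c * v) =
      -c / (2 * b) * ((↑Real.pi / -b) ^ (1/2 : ℂ) * Complex.exp (-(c ^ 2) / (4 * b))) := by
  have hb0 : b ≠ 0 := fun h => by simp [h] at hb
  set g : ℝ → ℂ := fun v => Complex.exp (b * v ^ 2 + c * v) with hg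
  have hderiv : ∀ v : ℝ, HasDerivAt g ((2 * b * v + c) * g v) v := by
    intro v
    have h1 : HasDerivAt (fun z : ℂ => b * z ^ 2 + c * z) (2 * b * v + c) (v : ℂ) := by
      have := ((hasDerivAt_pow 2 (v:ℂ)).const_mul b).add
        ((hasDerivAt_id (v:ℂ)).const_mul c)
      exact this.congr_deriv (by rw [show (2 - 1 : ℕ) = 1 from rfl]; push_cast; ring)
    simpa [hg, mul_comm] using (h1.comp_ofReal).cexp
  have hgint : Integrable g := by
    have := integrable_cexp_quadratic' hb c 0
    exact this.congr (Filter.EventuallyEq.of_eq (by funext v; simp [hg]))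
  have hvgint := integrable_id_mul_cexp hb c
  have hint' : Integrable fun v : ℝ => (2 * b * v + c) * g v := by
    have he : (fun v : ℝ => (2 * b * v + c) * g v)
        = fun v : ℝ => (2 * b) * ((v:ℂ) * g v) + c * g v := by
      funext v; ring
    rw [he]
    exact ((hvgint.const_mul (2*b)).add (hgint.const_mul c))
  have hsq_top : Tendsto (fun v : ℝ => v ^ 2) atTop atTop :=
    tendsto_pow_atTop two_ne_zero
  have hsq_bot : Tendsto (fun v : ℝ => v ^ 2) atBot atTop := by
    have he : (fun v : ℝ => v ^ 2) = fun v : ℝ => |v| ^ 2 := by funext v; exact (_root_.sq_abs v).symm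
    rw [he]
    exact (tendsto_pow_atTop two_ne_zero).comp tendsto_abs_atBot_atTop
  have htop : Tendsto g atTop (nhds 0) := tendsto_cexp_quad hb c hsq_top
  have hbot : Tendsto g atBot (nhds 0) := tendsto_cexp_quad hb c hsq_bot
  have hzero : ∫ v : ℝ, (2 * b * v + c) * g v = 0 := by
    rw [integral_of_hasDerivAt_of_tendsto hderiv hint' hbot htop]
    simp
  have hsplit : ∫ v : ℝ, (2 * b * v + c) * g v
      = (2 * b) * (∫ v : ℝ, (v:ℂ) * g v) + c * ∫ v : ℝ, g v := by
    rw [← integral_const_mul, ← integral_const_mul, ← integral_add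
      (hvgint.const_mul (2*b)) (hgint.const_mul c)]
    congr 1; funext v; ring
  have hgval : ∫ v : ℝ, g v = (↑Real.pi / -b) ^ (1/2 : ℂ) * Complex.exp (-(c ^ 2) / (4 * b)) := by
    have h := integral_cexp_quadratic hb c 0
    simp only [zero_sub] at h
    rw [hg]
    convert h using 2
    · funext; simp
    · rw [neg_div]
  have hkey := hsplit.symm.trans hzero
  rw [hgval] at hkey
  have h2b : (2 * b) ≠ 0 := by simp [hb0]
  simp only [hg] at hkey
  rw [div_mul_eq_mul_div, eq_div_iff h2b]
  linear_combination hkey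

noncomputable def rotL : (ℝ × ℝ) →ₗ[ℝ] (ℝ × ℝ) where
  toFun p := ((p.1 + p.2) / Real.sqrt 2, (p.1 - p.2) / Real.sqrt 2)
  map_add' p q := by
    simp only [Prod.fst_add, Prod.snd_add, Prod.mk_add_mk, Prod.mk.injEq]
    constructor <;> ring
  map_smul' c p := by
    simp only [Prod.smul_fst, Prod.smul_snd, smul_eq_mul, RingHom.id_apply, Prod.smul_mk,
      Prod.mk.injEq]
    constructor <;> ring

lemma rotL_rotL (p : ℝ × ℝ) : rotL (rotL p) = p := by
  have h2 : Real.sqrt 2 ≠ 0 := by positivity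
  have hsq : Real.sqrt 2 * Real.sqrt 2 = 2 := Real.mul_self_sqrt (by norm_num)
  simp only [rotL, LinearMap.coe_mk, AddHom.coe_mk]
  rw [Prod.ext_iff]
  constructor <;> field_simp <;> rw [Real.sq_sqrt (by norm_num : (0:ℝ) ≤ 2)] <;> ring

lemma rotL_det_ne_zero : LinearMap.det (rotL) ≠ 0 := by
  intro h
  have hcomp : rotL ∘ₗ rotL = LinearMap.id := by
    apply LinearMap.ext; intro p; simp [rotL_rotL]
  have := congrArg LinearMap.det hcomp
  rw [LinearMap.det_comp, LinearMap.det_id, h] at this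
  simp at this

lemma rotL_abs_det : |(LinearMap.det rotL)⁻¹| = 1 := by
  have hcomp : rotL ∘ₗ rotL = LinearMap.id := by
    apply LinearMap.ext; intro p; simp [rotL_rotL]
  have h := congrArg LinearMap.det hcomp
  rw [LinearMap.det_comp, LinearMap.det_id] at h
  have : |LinearMap.det rotL| = 1 := by
    have h2 : |LinearMap.det rotL| * |LinearMap.det rotL| = 1 := by
      rw [← abs_mul, h, abs_one]
    nlinarith [abs_nonneg (LinearMap.det rotL)]
  rw [abs_inv, this]
  norm_num

lemma measurePreserving_rotL :
    MeasurePreserving (fun p : ℝ × ℝ => rotL p) volume volume := by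
  constructor
  · exact rotL.continuous_of_finiteDimensional.measurable
  · rw [show (fun p : ℝ × ℝ => rotL p) = (rotL : (ℝ×ℝ) →ₗ[ℝ] (ℝ×ℝ)) from rfl]
    rw [Measure.map_linearMap_addHaar_eq_smul_addHaar volume rotL_det_ne_zero]
    rw [rotL_abs_det]
    simp

noncomputable def rotHomeo : (ℝ × ℝ) ≃ₜ (ℝ × ℝ) where
  toFun := fun p => rotL p
  invFun := fun p => rotL p
  left_inv := rotL_rotL
  right_inv := rotL_rotL
  continuous_toFun := rotL.continuous_of_finiteDimensional
  continuous_invFun := rotL.continuous_of_finiteDimensional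

lemma integral_comp_rotL (f : ℝ × ℝ → ℂ) :
    ∫ p : ℝ × ℝ, f (rotL p) = ∫ p : ℝ × ℝ, f p :=
  measurePreserving_rotL.integral_comp rotHomeo.measurableEmbedding f

lemma quad_dom {br gr e u v : ℝ} (h3 : br = -e - |gr|/2) :
    br * (u^2 + v^2) + |gr * (u * v)| ≤ -e * u^2 + -e * v^2 := by
  have h1 : |gr * (u * v)| ≤ |gr| * (|u| * |v|) := by
    rw [abs_mul, abs_mul]
  have h2 : |u| * |v| ≤ (u^2 + v^2)/2 := by
    nlinarith [sq_nonneg (|u| - |v|), _root_.sq_abs u, _root_.sq_abs v]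
  nlinarith [abs_nonneg gr, mul_le_mul_of_nonneg_left h2 (abs_nonneg gr)]

lemma re_ofReal_div_pos {r : ℝ} (hr : 0 < r) {z : ℂ} (hz : 0 < z.re) :
    0 < ((r:ℂ)/z).re := by
  have hz0 : z ≠ 0 := fun h => by simp [h] at hz
  rw [div_eq_mul_inv]
  have h1 : ((r:ℂ) * z⁻¹).re = r * (z⁻¹).re := by
    simp [Complex.mul_re]
  rw [h1]
  apply mul_pos hr
  rw [Complex.inv_re]
  exact div_pos hz (Complex.normSq_pos.2 hz0)

set_option maxHeartbeats 2000000

/-- Lemma `intgauss`: the Gaussian double integral identity. -/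
theorem stmt0 (α β : ℂ) (hα : α.re < 1/2) (hβ : β.re < 1/2) :
    (∫ p : ℝ × ℝ,
      Complex.exp (-(((p.1^2 + p.2^2)/2 : ℝ) : ℂ)) *
        (((p.1 - p.2)/(p.1 + p.2) : ℝ) : ℂ) *
        (Complex.exp (α * (p.1:ℂ)^2 + β * (p.2:ℂ)^2) -
          Complex.exp (α * (p.2:ℂ)^2 + β * (p.1:ℂ)^2)))
    = 4 * (Real.pi : ℂ) * (α - β) /
        ((1 - α - β) * (1 - 2*α) ^ ((1:ℂ)/2) * (1 - 2*β) ^ ((1:ℂ)/2)) := by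
  have hπ := Real.pi_pos
  set P : ℂ := 1 - 2*α with hP_def
  set Q : ℂ := 1 - 2*β with hQ_def
  have hPre : 0 < P.re := by
    simp only [hP_def, Complex.sub_re, Complex.one_re, Complex.mul_re, Complex.ofReal_re]
    norm_num; linarith
  have hQre : 0 < Q.re := by
    simp only [hQ_def, Complex.sub_re, Complex.one_re, Complex.mul_re, Complex.ofReal_re]
    norm_num; linarith
  have hP0 : P ≠ 0 := fun h => by simp [h] at hPre
  have hQ0 : Q ≠ 0 := fun h => by simp [h] at hQre
  set b : ℂ := (α + β - 1)/2 with hb_def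
  set γ : ℂ := α - β with hγ_def
  have hbre : b.re = (α.re + β.re - 1)/2 := by
    simp [hb_def, Complex.div_re, Complex.normSq_apply]
    try ring
  have hγre : γ.re = α.re - β.re := by simp [hγ_def]
  have hb : b.re < 0 := by rw [hbre]; linarith
  have hb0 : b ≠ 0 := fun h => by simp [h] at hb
  set F : ℝ × ℝ → ℂ := fun w =>
    Complex.exp (b * ((w.1:ℂ)^2 + (w.2:ℂ)^2)) * ((w.2/w.1 : ℝ) : ℂ) *
      (Complex.exp (γ * w.1 * w.2) - Complex.exp (-(γ * (w.1:ℂ) * w.2))) with hF_def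
  -- Step 1 : rotation
  have step1 : (∫ p : ℝ × ℝ,
      Complex.exp (-(((p.1^2 + p.2^2)/2 : ℝ) : ℂ)) *
        (((p.1 - p.2)/(p.1 + p.2) : ℝ) : ℂ) *
        (Complex.exp (α * (p.1:ℂ)^2 + β * (p.2:ℂ)^2) -
          Complex.exp (α * (p.2:ℂ)^2 + β * (p.1:ℂ)^2))) = ∫ w : ℝ × ℝ, F w := by
    rw [← integral_comp_rotL (fun p : ℝ × ℝ =>
      Complex.exp (-(((p.1^2 + p.2^2)/2 : ℝ) : ℂ)) *
        (((p.1 - p.2)/(p.1 + p.2) : ℝ) : ℂ) *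
        (Complex.exp (α * (p.1:ℂ)^2 + β * (p.2:ℂ)^2) -
          Complex.exp (α * (p.2:ℂ)^2 + β * (p.1:ℂ)^2)))]
    congr 1
    funext w
    obtain ⟨u, v⟩ := w
    have hs0 : Real.sqrt 2 ≠ 0 := by positivity
    have hsq : Real.sqrt 2 * Real.sqrt 2 = 2 := Real.mul_self_sqrt (by norm_num)
    have hsqC2 : ((Real.sqrt 2 : ℝ) : ℂ) ^ 2 = 2 := by
      rw [pow_two, ← Complex.ofReal_mul, hsq]; norm_num
    have hs0C : ((Real.sqrt 2 : ℝ) : ℂ) ≠ 0 := Complex.ofReal_ne_zero.2 hs0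
    have hrot : rotL (u, v) =
        ((u + v)/Real.sqrt 2, (u - v)/Real.sqrt 2) := rfl
    rw [hrot]
    simp only [hF_def]
    set s : ℝ := Real.sqrt 2
    have hratio : (((u + v)/s - (u - v)/s)/((u + v)/s + (u - v)/s) : ℝ) = v/u := by
      have h1 : ((u + v)/s - (u - v)/s : ℝ) = (2/s) * v := by field_simp; ring
      have h2 : ((u + v)/s + (u - v)/s : ℝ) = (2/s) * u := by field_simp; ring
      rw [h1, h2, mul_div_mul_left v u (by positivity : (2:ℝ)/s ≠ 0)]
    rw [hratio]
    have expand : ∀ (r E0 E1 E2 : ℂ), Complex.exp E0 * r * (Complex.exp E1 - Complex.exp E2)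
        = r * (Complex.exp (E0 + E1) - Complex.exp (E0 + E2)) := by
      intro r E0 E1 E2
      rw [Complex.exp_add, Complex.exp_add]; ring
    rw [expand, expand]
    congr 2
    · congr 1
      push_cast
      simp only [div_pow, hsqC2]
      field_simp
      ring
    · congr 1
      push_cast
      simp only [div_pow, hsqC2]
      field_simp
      ring
  -- Step 2 : integrability
  set ε : ℝ := -b.re - |γ.re|/2 with hε_def
  have hε : 0 < ε := by
    rw [hε_def, hbre, hγre]
    rcases abs_cases (α.re - β.re) with ⟨h1, _⟩ | ⟨h1, _⟩ <;> rw [h1] <;> linarith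
  have hFb : ∀ w : ℝ × ℝ, ‖F w‖ ≤
      2 * ‖γ‖ * (Real.exp (-ε * w.1^2) * (w.2^2 * Real.exp (-ε * w.2^2))) := by
    rintro ⟨u, v⟩
    simp only [hF_def]
    rcases eq_or_ne u 0 with rfl | hu
    · have h0 : ((v/(0:ℝ) : ℝ) : ℂ) = 0 := by norm_num
      rw [h0, mul_zero, zero_mul, norm_zero]
      positivity
    · rw [norm_mul, norm_mul, Complex.norm_exp]
      have hre1 : (b * ((u:ℂ)^2 + (v:ℂ)^2)).re = b.re * (u^2 + v^2) := by
        simp [pow_two, Complex.mul_re, Complex.mul_im, Complex.add_re, Complex.add_im]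
        try ring
      rw [hre1]
      have hwre : (γ * (u:ℂ) * v).re = γ.re * (u * v) := by
        simp [Complex.mul_re, Complex.mul_im]
        try ring
      have hwnorm : ‖γ * (u:ℂ) * (v:ℂ)‖ = ‖γ‖ * (|u| * |v|) := by
        rw [norm_mul, norm_mul, Complex.norm_real, Complex.norm_real,
          Real.norm_eq_abs, Real.norm_eq_abs]
        ring
      have hsub := norm_exp_sub_exp_neg_le (γ * (u:ℂ) * v)
      rw [hwre, hwnorm] at hsub
      have hrat : ‖((v/u : ℝ) : ℂ)‖ = |v| / |u| := by
        rw [Complex.norm_real, Real.norm_eq_abs, abs_div]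
      rw [hrat]
      calc Real.exp (b.re * (u^2 + v^2)) * (|v| / |u|) *
            ‖Complex.exp (γ * (u:ℂ) * v) - Complex.exp (-(γ * (u:ℂ) * v))‖
          ≤ Real.exp (b.re * (u^2 + v^2)) * (|v| / |u|) *
            (2 * (‖γ‖ * (|u| * |v|)) * Real.exp |γ.re * (u * v)|) := by
            apply mul_le_mul_of_nonneg_left hsub (by positivity)
        _ = 2 * ‖γ‖ * (v^2 * (|u| / |u|)) *
            (Real.exp (b.re * (u^2 + v^2)) * Real.exp |γ.re * (u * v)|) := by
            rw [← _root_.sq_abs v]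
            ring
        _ ≤ 2 * ‖γ‖ * (Real.exp (-ε * u^2) * (v^2 * Real.exp (-ε * v^2))) := by
            rw [div_self (abs_ne_zero.2 hu), mul_one, ← Real.exp_add]
            have hexp : b.re * (u^2 + v^2) + |γ.re * (u * v)| ≤ -ε * u^2 + -ε * v^2 :=
              quad_dom (by rw [hε_def]; ring)
            have h5 : v^2 * Real.exp (b.re * (u^2 + v^2) + |γ.re * (u * v)|)
                ≤ Real.exp (-ε * u^2) * (v^2 * Real.exp (-ε * v^2)) := by
              rw [show Real.exp (-ε * u^2) * (v^2 * Real.exp (-ε * v^2))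
                  = v^2 * Real.exp (-ε * u^2 + -ε * v^2) by rw [Real.exp_add]; ring]
              exact mul_le_mul_of_nonneg_left (Real.exp_le_exp.2 hexp) (sq_nonneg v)
            calc 2 * ‖γ‖ * v^2 * Real.exp (b.re * (u^2 + v^2) + |γ.re * (u * v)|)
                = 2 * ‖γ‖ * (v^2 * Real.exp (b.re * (u^2 + v^2) + |γ.re * (u * v)|)) := by ring
              _ ≤ 2 * ‖γ‖ * (Real.exp (-ε * u^2) * (v^2 * Real.exp (-ε * v^2))) :=
                  mul_le_mul_of_nonneg_left h5 (by positivity)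
  have hFm : AEStronglyMeasurable F volume := by
    apply Measurable.aestronglyMeasurable
    have m1 : Measurable fun w : ℝ × ℝ => Complex.exp (b * ((w.1:ℂ)^2 + (w.2:ℂ)^2)) :=
      (Complex.continuous_exp.comp (by continuity)).measurable
    have m2 : Measurable fun w : ℝ × ℝ => ((w.2/w.1 : ℝ) : ℂ) :=
      Complex.measurable_ofReal.comp (measurable_snd.div measurable_fst)
    have m3 : Measurable fun w : ℝ × ℝ =>
        Complex.exp (γ * w.1 * w.2) - Complex.exp (-(γ * (w.1:ℂ) * w.2)) :=
      ((Complex.continuous_exp.comp (by continuity)).sub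
        (Complex.continuous_exp.comp (by continuity))).measurable
    exact (m1.mul m2).mul m3
  have hdom : Integrable (fun w : ℝ × ℝ =>
      2 * ‖γ‖ * (Real.exp (-ε * w.1^2) * (w.2^2 * Real.exp (-ε * w.2^2)))) volume := by
    have h1 : Integrable fun x : ℝ => Real.exp (-ε * x^2) := integrable_exp_neg_mul_sq hε
    have h2 : Integrable fun x : ℝ => x^2 * Real.exp (-ε * x^2) := by
      have h := integrable_rpow_mul_exp_neg_mul_sq hε (by norm_num : (-1:ℝ) < 2)
      apply h.congr
      apply Filter.EventuallyEq.of_eq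
      funext x
      norm_num [show ((2:ℝ)) = ((2:ℕ):ℝ) by norm_num, Real.rpow_natCast]
    have h3 := h1.mul_prod h2
    have h4 := h3.const_mul (2 * ‖γ‖)
    rw [← Measure.volume_eq_prod] at h4
    apply h4.congr
    apply Filter.EventuallyEq.of_eq
    funext w
    ring
  have hFint : Integrable F volume := hdom.mono' hFm (Filter.Eventually.of_forall hFb)
  have step2 : ∫ w : ℝ × ℝ, F w = ∫ u : ℝ, ∫ v : ℝ, F (u, v) := by
    rw [Measure.volume_eq_prod] at hFint ⊢
    exact integral_prod F hFint
  -- Step 3 : inner integral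
  set b' : ℂ := b - γ^2/(4*b) with hb'_def
  have inner_eq : ∀ u : ℝ, u ≠ 0 →
      (∫ v : ℝ, F (u, v)) = (-γ/b) * ((Real.pi:ℂ)/(-b)) ^ (1/2:ℂ) *
        Complex.exp (b' * u^2) := by
    intro u hu
    have huC : (u:ℂ) ≠ 0 := Complex.ofReal_ne_zero.2 hu
    have hptw : ∀ v : ℝ, F (u, v) = (Complex.exp (b * u^2)/u) *
        ((v:ℂ) * Complex.exp (b * v^2 + (γ * u) * v)
          - (v:ℂ) * Complex.exp (b * v^2 + (-(γ * u)) * v)) := by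
      intro v
      simp only [hF_def]
      rw [Complex.ofReal_div]
      rw [show b * ((u:ℂ)^2 + (v:ℂ)^2) = b * u^2 + b * v^2 by ring, Complex.exp_add]
      rw [show b * (v:ℂ)^2 + (γ * u) * v = b * v^2 + γ * u * v by ring]
      rw [show b * (v:ℂ)^2 + (-(γ * (u:ℂ))) * v = b * v^2 + -(γ * u * v) by ring]
      rw [Complex.exp_add, Complex.exp_add]
      field_simp
    rw [show (∫ v : ℝ, F (u, v)) = ∫ v : ℝ, (Complex.exp (b * u^2)/u) *
        ((v:ℂ) * Complex.exp (b * v^2 + (γ * u) * v)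
          - (v:ℂ) * Complex.exp (b * v^2 + (-(γ * u)) * v)) from by simp only [hptw]]
    rw [integral_const_mul]
    rw [integral_sub (integrable_id_mul_cexp hb (γ * u)) (integrable_id_mul_cexp hb (-(γ * u)))]
    rw [integral_id_mul_cexp hb (γ * u), integral_id_mul_cexp hb (-(γ * u))]
    rw [show (-(γ * (u:ℂ)))^2 = (γ * u)^2 by ring]
    have hcexp : Complex.exp (b * (u:ℂ)^2) * Complex.exp (-((γ * (u:ℂ))^2)/(4 * b))
        = Complex.exp (b' * u^2) := by
      rw [← Complex.exp_add]
      congr 1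
      simp only [hb'_def]
      field_simp
      ring
    rw [← hcexp]
    field_simp
    ring
  -- Step 4 : outer integral
  have hpq : P + Q = -(4 * b) := by simp only [hP_def, hQ_def, hb_def]; ring
  have hpq0 : P + Q ≠ 0 := fun h => by
    have h2 := congrArg Complex.re h
    simp only [Complex.add_re, Complex.zero_re] at h2
    linarith
  have hab1 : (α + β - 1 : ℂ) ≠ 0 := by
    intro h
    have h2 := congrArg Complex.re h
    simp only [Complex.sub_re, Complex.add_re, Complex.one_re, Complex.zero_re] at h2
    linarith
  have hb'eq : b' = -(P * Q/(P + Q)) := by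
    have hPQ : P * Q = 4*b^2 - γ^2 := by simp only [hP_def, hQ_def, hb_def, hγ_def]; ring
    rw [hpq, hPQ, hb'_def]
    field_simp
  have hb' : b'.re < 0 := by
    rw [hb'eq]
    simp only [Complex.neg_re]
    linarith [re_mul_div_add_pos hPre hQre]
  have h0ae : ∀ᵐ u : ℝ, u ≠ 0 := by
    have hvol : volume ({0} : Set ℝ) = 0 := Real.volume_singleton
    filter_upwards [compl_mem_ae_iff.2 hvol] with u hu
    simpa using hu
  have step3 : (∫ u : ℝ, ∫ v : ℝ, F (u, v))
      = ∫ u : ℝ, (-γ/b) * ((Real.pi:ℂ)/(-b)) ^ (1/2:ℂ) * Complex.exp (b' * u^2) := by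
    apply integral_congr_ae
    filter_upwards [h0ae] with u hu
    exact inner_eq u hu
  have hcint : (∫ u : ℝ, Complex.exp (b' * u^2)) = ((Real.pi:ℂ)/(-b')) ^ (1/2:ℂ) := by
    have h := integral_cexp_quadratic hb' 0 0
    simpa using h
  have step4 : (∫ u : ℝ, (-γ/b) * ((Real.pi:ℂ)/(-b)) ^ (1/2:ℂ) * Complex.exp (b' * u^2))
      = (-γ/b) * (((Real.pi:ℂ)/(-b)) ^ (1/2:ℂ) * ((Real.pi:ℂ)/(-b')) ^ (1/2:ℂ)) := by
    simp_rw [mul_assoc]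
    rw [integral_const_mul, integral_const_mul, hcint]
  -- Step 5 : final algebra
  have hmb : -b = (P + Q)/4 := by rw [hpq]; ring
  have hmb' : -b' = P * Q/(P + Q) := by rw [hb'eq]; ring
  have hPQ0 : P * Q ≠ 0 := mul_ne_zero hP0 hQ0
  have hzre : 0 < ((Real.pi:ℂ)/(-b)).re :=
    re_ofReal_div_pos hπ (by simp only [Complex.neg_re]; linarith)
  have hwre : 0 < ((Real.pi:ℂ)/(-b')).re :=
    re_ofReal_div_pos hπ (by simp only [Complex.neg_re]; linarith)
  have hzw : ((Real.pi:ℂ)/(-b)) * ((Real.pi:ℂ)/(-b'))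
      = ((4*Real.pi^2 : ℝ):ℂ) * (P * Q)⁻¹ := by
    have h1 : (-b) * (-b') = P * Q/4 := by
      rw [hmb, hmb']
      field_simp
    rw [div_mul_div_comm, h1]
    push_cast
    field_simp
  have key : ((Real.pi:ℂ)/(-b)) ^ (1/2:ℂ) * ((Real.pi:ℂ)/(-b')) ^ (1/2:ℂ)
      = ((2*Real.pi : ℝ):ℂ) * (P ^ (1/2:ℂ) * Q ^ (1/2:ℂ))⁻¹ := by
    rw [← sqrt_mul' hzre hwre, hzw,
      ofReal_mul_sqrt (by positivity) (inv_ne_zero hPQ0),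
      Complex.inv_cpow _ _ (arg_mul_ne_pi hPre hQre),
      sqrt_mul' hPre hQre]
    congr 2
    rw [show (4*Real.pi^2 : ℝ) = (2*Real.pi)^2 by ring, Real.sqrt_sq (by positivity)]
  have hA0 : P ^ (1/2:ℂ) ≠ 0 := by
    intro h
    rw [Complex.cpow_eq_zero_iff] at h
    exact hP0 h.1
  have hB0 : Q ^ (1/2:ℂ) ≠ 0 := by
    intro h
    rw [Complex.cpow_eq_zero_iff] at h
    exact hQ0 h.1
  have h1ab : (1 - α - β : ℂ) = -(2*b) := by simp only [hb_def]; ring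
  rw [step1, step2, step3, step4]
  rw [show (-γ/b) * (((Real.pi:ℂ)/(-b)) ^ (1/2:ℂ) * ((Real.pi:ℂ)/(-b')) ^ (1/2:ℂ))
      = (-γ/b) * (((2*Real.pi : ℝ):ℂ) * (P ^ (1/2:ℂ) * Q ^ (1/2:ℂ))⁻¹) from by rw [key]]
  rw [h1ab]
  push_cast
  field_simp
  ring
end

section
/- Let ϱ₁, ..., ϱ_M ∈ (0, 1/2) be pairwise distinct real numbers such that the antisymmetric matrix G̃ = [(ϱ_j - ϱ_k)/(1 - ϱ_j - ϱ_k)]_{j,k=1}^M is invertible, with inverse C̃ = [c̃_{jk}]. Define the rational functions f_j(z) = Σ_{l=1}^M ((z - ϱ_l)/(1 - z - ϱ_l)) c̃_{lj}. Then for each j, f_j(z) = ∏_{k≠j} ((z - ϱ_k)/(1 - z - ϱ_k)) · ((1 - ϱ_j - ϱ_k)/(ϱ_j - ϱ_k)) for all z where both sides are defined. -/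
open Polynomial Finset Matrix


/-- The identity \eqref{frelation2} for the inverse of the Gram-type matrix
`G̃ = [(ϱ_j - ϱ_k)/(1 - ϱ_j - ϱ_k)]`. -/
theorem stmt5 (M : ℕ) (hM : 0 < M) (ϱ : Fin M → ℝ)
    (hmem : ∀ i, ϱ i ∈ Set.Ioo (0:ℝ) (1/2))
    (hdist : Function.Injective ϱ)
    (G : Matrix (Fin M) (Fin M) ℂ)
    (hG : ∀ j k, G j k = (((ϱ j - ϱ k)/(1 - ϱ j - ϱ k) : ℝ) : ℂ))
    (hinv : IsUnit G.det)
    (j : Fin M) (z : ℂ) (hz : ∀ l, 1 - z - (ϱ l : ℂ) ≠ 0) :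
    (∑ l, (z - (ϱ l : ℂ))/(1 - z - (ϱ l : ℂ)) * G⁻¹ l j)
    = ∏ k ∈ Finset.univ.erase j,
        ((z - (ϱ k : ℂ))/(1 - z - (ϱ k : ℂ))) *
          (((1 - ϱ j - ϱ k)/(ϱ j - ϱ k) : ℝ) : ℂ) := by
  classical
  have hhalf : ∀ i, ϱ i < 1/2 := fun i => (hmem i).2
  have hne : ∀ a b : Fin M, (1:ℂ) - (ϱ a : ℂ) - (ϱ b : ℂ) ≠ 0 := by
    intro a b
    have h : (0:ℝ) < 1 - ϱ a - ϱ b := by have := hhalf a; have := hhalf b; linarith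
    have : ((1 - ϱ a - ϱ b : ℝ):ℂ) ≠ 0 := by exact_mod_cast h.ne'
    push_cast at this; exact this
  have hdiff : ∀ a b : Fin M, a ≠ b → (ϱ a : ℂ) - (ϱ b : ℂ) ≠ 0 := by
    intro a b hab
    have : ϱ a ≠ ϱ b := fun h => hab (hdist h)
    intro h
    apply this
    have := sub_eq_zero.mp h
    exact_mod_cast this
  have hGinv : G * G⁻¹ = 1 := Matrix.mul_nonsing_inv G hinv
  -- (G⁻¹) j j = 0 by antisymmetry
  have hCjj : G⁻¹ j j = 0 := by
    have hGT : Gᵀ = -G := by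
      ext a b
      simp only [Matrix.transpose_apply, Matrix.neg_apply, hG]
      have : (ϱ b - ϱ a)/(1 - ϱ b - ϱ a) = -((ϱ a - ϱ b)/(1 - ϱ a - ϱ b)) := by
        rw [← neg_div]
        ring_nf
      rw [this]; push_cast; ring
    have h1 : (-G) * (-(G⁻¹)) = 1 := by simpa using hGinv
    have h2 : (G⁻¹)ᵀ = -(G⁻¹) := by
      rw [Matrix.transpose_nonsing_inv, hGT]
      exact Matrix.inv_eq_right_inv h1
    have := congrFun (congrFun h2 j) j
    simp only [Matrix.transpose_apply, Matrix.neg_apply] at this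
    linear_combination this / 2
  -- key cancellation lemma
  have key : ∀ (x : ℂ) (c : Fin M → ℂ), (∀ l, 1 - x - (ϱ l:ℂ) ≠ 0) →
      (∑ l, c l * (x - (ϱ l:ℂ)) * ∏ m ∈ univ.erase l, (1 - x - (ϱ m:ℂ)))
      = (∑ l, (x - (ϱ l:ℂ))/(1 - x - (ϱ l:ℂ)) * c l) * ∏ m, (1 - x - (ϱ m:ℂ)) := by
    intro x c hx
    rw [Finset.sum_mul]
    refine Finset.sum_congr rfl fun l _ => ?_
    rw [← Finset.mul_prod_erase univ _ (Finset.mem_univ l)]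
    generalize (∏ m ∈ univ.erase l, (1 - x - (ϱ m:ℂ))) = p
    field_simp [hx l]
  -- the polynomials
  set P : ℂ[X] := ∑ l, C (G⁻¹ l j) * (X - C ((ϱ l:ℂ))) *
      ∏ m ∈ univ.erase l, (1 - X - C ((ϱ m:ℂ))) with hPdef
  set c0 : ℂ := ∏ k ∈ univ.erase j, (((1 - ϱ j - ϱ k)/(ϱ j - ϱ k) : ℝ) : ℂ) with hc0def
  set Q : ℂ[X] := C c0 * (1 - X - C ((ϱ j:ℂ))) * ∏ k ∈ univ.erase j, (X - C ((ϱ k:ℂ)))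
    with hQdef
  have hPeval : ∀ x : ℂ, P.eval x = ∑ l, (G⁻¹ l j) * (x - (ϱ l:ℂ)) *
      ∏ m ∈ univ.erase l, (1 - x - (ϱ m:ℂ)) := by
    intro x
    simp [hPdef, eval_finset_sum, eval_prod]
  have hQeval : ∀ x : ℂ, Q.eval x = c0 * (1 - x - (ϱ j:ℂ)) *
      ∏ k ∈ univ.erase j, (x - (ϱ k:ℂ)) := by
    intro x
    simp [hQdef, eval_prod]
  -- degree bounds
  have hdeg1 : ∀ a : ℂ, ((1 : ℂ[X]) - X - C a).natDegree ≤ 1 := by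
    intro a
    have : (1 : ℂ[X]) - X - C a = -(X - C (1 - a)) := by
      rw [map_sub, Polynomial.C_1]; ring
    rw [this, natDegree_neg, natDegree_X_sub_C]
  have hdeg2 : ∀ a : ℂ, ((X : ℂ[X]) - C a).natDegree ≤ 1 := fun a => le_of_eq (natDegree_X_sub_C a)
  have hcarde : (univ.erase j).card = M - 1 := by
    rw [Finset.card_erase_of_mem (Finset.mem_univ j)]
    simp
  have hprodd : ∀ (l : Fin M) (f : Fin M → ℂ[X]), (∀ m, (f m).natDegree ≤ 1) →
      (∏ m ∈ univ.erase l, f m).natDegree ≤ M - 1 := by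
    intro l f hf
    refine (natDegree_prod_le _ _).trans ?_
    calc ∑ m ∈ univ.erase l, (f m).natDegree ≤ ∑ m ∈ univ.erase l, 1 :=
          Finset.sum_le_sum fun m _ => hf m
      _ = M - 1 := by
          rw [Finset.sum_const, smul_eq_mul, mul_one,
            Finset.card_erase_of_mem (Finset.mem_univ l)]
          simp
  have hPdeg : P.natDegree ≤ M := by
    refine natDegree_sum_le_of_forall_le _ _ fun l _ => natDegree_mul_le.trans ?_
    have h1 : (C (G⁻¹ l j) * (X - C ((ϱ l:ℂ)))).natDegree ≤ 1 :=
      natDegree_mul_le.trans (by simpa using hdeg2 ((ϱ l:ℂ)))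
    have h2 : (∏ m ∈ univ.erase l, ((1:ℂ[X]) - X - C ((ϱ m:ℂ)))).natDegree ≤ M - 1 :=
      hprodd l _ fun m => hdeg1 _
    have := add_le_add h1 h2
    omega
  have hQdeg : Q.natDegree ≤ M := by
    refine (natDegree_mul_le).trans ?_
    have h1 : (C c0 * ((1:ℂ[X]) - X - C ((ϱ j:ℂ)))).natDegree ≤ 1 :=
      natDegree_mul_le.trans (by simpa using hdeg1 ((ϱ j:ℂ)))
    have h2 : (∏ m ∈ univ.erase j, ((X:ℂ[X]) - C ((ϱ m:ℂ)))).natDegree ≤ M - 1 :=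
      hprodd j _ fun m => hdeg2 _
    have := add_le_add h1 h2
    omega
  -- the interpolation points
  have hinj : Function.Injective (fun i : Fin M => ((ϱ i : ℂ))) := by
    intro a b h
    simp only [Complex.ofReal_inj] at h
    exact hdist h
  have hnm : (1:ℂ) - (ϱ j:ℂ) ∉ univ.image (fun i : Fin M => ((ϱ i : ℂ))) := by
    simp only [Finset.mem_image, Finset.mem_univ, true_and, not_exists]
    intro m h
    have : (ϱ m : ℂ) + (ϱ j : ℂ) = 1 := by linear_combination h
    have hr : ϱ m + ϱ j = 1 := by exact_mod_cast this
    have := hhalf m; have := hhalf j; linarith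
  set s : Finset ℂ := insert ((1:ℂ) - (ϱ j:ℂ)) (univ.image (fun i : Fin M => ((ϱ i : ℂ)))) with hsdef
  have hscard : s.card = M + 1 := by
    rw [hsdef, Finset.card_insert_of_notMem hnm, Finset.card_image_of_injective _ hinj]
    simp
  -- evaluations agree on s
  have hone : ∀ m : Fin M, (1:ℂ) - (1 - (ϱ j:ℂ)) - (ϱ m:ℂ) = (ϱ j:ℂ) - (ϱ m:ℂ) := by
    intro m; ring
  have heval : ∀ x ∈ s, (P - Q).eval x = 0 := by
    intro x hx
    rw [eval_sub, sub_eq_zero]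
    rw [hsdef, Finset.mem_insert, Finset.mem_image] at hx
    rcases hx with rfl | ⟨m, _, rfl⟩
    · -- x = 1 - ϱ j
      rw [hPeval, hQeval]
      have hr : (1:ℂ) - (1 - (ϱ j:ℂ)) - (ϱ j:ℂ) = 0 := by ring
      rw [hr, mul_zero, zero_mul]
      refine Finset.sum_eq_zero fun l _ => ?_
      by_cases hl : l = j
      · subst hl; rw [hCjj]; simp
      · have hjm : j ∈ univ.erase l := Finset.mem_erase.mpr ⟨Ne.symm hl, Finset.mem_univ j⟩
        rw [Finset.prod_eq_zero hjm (by ring), mul_zero]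
    · -- x = ϱ m
      rw [hPeval, hQeval, key _ _ (fun l => hne m l)]
      have hsum : (∑ l, ((ϱ m:ℂ) - (ϱ l:ℂ))/(1 - (ϱ m:ℂ) - (ϱ l:ℂ)) * G⁻¹ l j)
          = (G * G⁻¹) m j := by
        rw [Matrix.mul_apply]
        refine Finset.sum_congr rfl fun l _ => ?_
        rw [hG m l]; push_cast; ring
      rw [hsum, hGinv, Matrix.one_apply]
      by_cases hmj : m = j
      · subst hmj
        rw [if_pos rfl, one_mul,
          ← Finset.mul_prod_erase univ _ (Finset.mem_univ m)]
        rw [hc0def]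
        rw [mul_comm ((∏ k ∈ univ.erase m, (((1 - ϱ m - ϱ k)/(ϱ m - ϱ k) : ℝ) : ℂ)))
          ((1:ℂ) - (ϱ m:ℂ) - (ϱ m:ℂ)), mul_assoc, ← Finset.prod_mul_distrib]
        congr 1
        refine Finset.prod_congr rfl fun k hk => ?_
        have hk' : m ≠ k := (Finset.mem_erase.mp hk).1.symm
        push_cast
        rw [div_mul_cancel₀]
        exact hdiff m k hk'
      · rw [if_neg hmj, zero_mul]
        have hmm : m ∈ univ.erase j := Finset.mem_erase.mpr ⟨hmj, Finset.mem_univ m⟩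
        rw [Finset.prod_eq_zero hmm (by ring), mul_zero]
  -- conclude P = Q
  have hPQ : P = Q := by
    have h0 : P - Q = 0 := by
      refine Polynomial.eq_zero_of_natDegree_lt_card_of_eval_eq_zero' _ s heval ?_
      have : (P - Q).natDegree ≤ M := (natDegree_sub_le _ _).trans (by omega)
      omega
    exact sub_eq_zero.mp h0
  -- evaluate at z and divide by the common denominator
  have hD : (∏ m, ((1:ℂ) - z - (ϱ m:ℂ))) ≠ 0 := Finset.prod_ne_zero_iff.mpr fun m _ => hz m
  apply mul_right_cancel₀ hD
  rw [← key z (fun l => G⁻¹ l j) hz, ← hPeval z, hPQ, hQeval z,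
    ← Finset.mul_prod_erase univ _ (Finset.mem_univ j), mul_left_comm,
    ← Finset.prod_mul_distrib,
    Finset.prod_congr rfl (fun k (hk : k ∈ univ.erase j) =>
      show (z - (ϱ k:ℂ))/(1 - z - (ϱ k:ℂ)) * (((1 - ϱ j - ϱ k)/(ϱ j - ϱ k) : ℝ) : ℂ) *
          (1 - z - (ϱ k:ℂ))
        = (((1 - ϱ j - ϱ k)/(ϱ j - ϱ k) : ℝ) : ℂ) * (z - (ϱ k:ℂ)) from by
        rw [mul_right_comm, div_mul_cancel₀ _ (hz k), mul_comm]),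
    Finset.prod_mul_distrib, ← hc0def]
  ring
end

section
/- Fix τ ∈ (0,1) and set η₋ = τ/(1-τ²), f(z) = 4η₋(z+1) + log(τz-1) - log(z-τ), z₀ = (1/2)(τ + 1/τ), and z₄ = 1 + i·((1-τ)/(2τ))·√((1+3τ)(1-τ)). Then Re f(z₄) - Re f(z₀) = -2(1-τ)/(1+τ) + (1/2)·log(1 + 4(1-τ)/(1+τ)), and this quantity is strictly negative for all τ ∈ (0,1). -/
/-- The real part of `f(z) = 4η₋(z+1) + log(τz-1) - log(z-τ)` with `η₋ = τ/(1-τ²)`. -/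
noncomputable def Ref17 (τ : ℝ) (z : ℂ) : ℝ :=
  4 * (τ/(1-τ^2)) * (z.re + 1) +
    Real.log (‖(τ*z - 1 : ℂ)‖) - Real.log (‖(z - τ : ℂ)‖)

/-- The estimate \eqref{nocri-airy-c3}:
`Re f(z₄) - Re f(z₀) = -2(1-τ)/(1+τ) + (1/2)log(1 + 4(1-τ)/(1+τ)) < 0`. -/
theorem stmt17 (τ : ℝ) (hτ : τ ∈ Set.Ioo (0:ℝ) 1) :
    Ref17 τ (1 + Complex.I * (((1-τ)/(2*τ)) * Real.sqrt ((1+3*τ)*(1-τ)) : ℝ))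
      - Ref17 τ (((1/2)*(τ + 1/τ) : ℝ))
      = -2*(1-τ)/(1+τ) + (1/2) * Real.log (1 + 4*(1-τ)/(1+τ))
    ∧ -2*(1-τ)/(1+τ) + (1/2) * Real.log (1 + 4*(1-τ)/(1+τ)) < 0 := by
  obtain ⟨h0, h1⟩ := hτ
  have hτ1 : (0:ℝ) < 1 - τ := by linarith
  have hτ2 : (0:ℝ) < 1 + τ := by linarith
  have hτsq : (0:ℝ) < 1 - τ^2 := by nlinarith
  have hX : (0:ℝ) ≤ (1+3*τ)*(1-τ) := by nlinarith
  have hY : (0:ℝ) < (5-3*τ)*(1+τ) := by nlinarith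
  obtain ⟨y, hy⟩ : ∃ y, Real.sqrt ((5-3*τ)*(1+τ)) = y := ⟨_, rfl⟩
  have hy2 : y^2 = (5-3*τ)*(1+τ) := by rw [← hy]; exact Real.sq_sqrt hY.le
  have hy0 : (0:ℝ) < y := by rw [← hy]; exact Real.sqrt_pos.mpr hY
  obtain ⟨s, hs⟩ : ∃ s, Real.sqrt ((1+3*τ)*(1-τ)) = s := ⟨_, rfl⟩
  have hs2 : s^2 = (1+3*τ)*(1-τ) := by rw [← hs]; exact Real.sq_sqrt hX
  rw [hs]
  obtain ⟨b, hb⟩ : ∃ b, ((1-τ)/(2*τ)) * s = b := ⟨_, rfl⟩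
  rw [hb]
  have hb2 : b^2 = ((1-τ)/(2*τ))^2 * ((1+3*τ)*(1-τ)) := by
    rw [← hb, mul_pow, hs2]
  -- the four absolute values
  have ha1 : ‖(τ:ℂ)*(1 + Complex.I * (b:ℝ)) - 1‖ = (1-τ)/2 * y := by
    rw [Complex.norm_def]
    have hns : Complex.normSq ((τ:ℂ)*(1 + Complex.I*(b:ℝ)) - 1) = (τ-1)^2 + τ^2*b^2 := by
      simp [Complex.normSq_apply]; ring
    have hns2 : Complex.normSq ((τ:ℂ)*(1 + Complex.I*(b:ℝ)) - 1)
        = ((1-τ)/2)^2 * ((5-3*τ)*(1+τ)) := by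
      rw [hns, hb2]; field_simp; ring
    rw [hns2, ← hy2, Real.sqrt_mul (sq_nonneg _), Real.sqrt_sq (by positivity),
      Real.sqrt_sq hy0.le]
  have ha2 : ‖(1 + Complex.I * (b:ℝ)) - (τ:ℂ)‖ = (1-τ^2)/(2*τ) := by
    rw [Complex.norm_def]
    have hns : Complex.normSq ((1 + Complex.I*(b:ℝ)) - (τ:ℂ)) = (1-τ)^2 + b^2 := by
      simp [Complex.normSq_apply]; ring
    have hns2 : Complex.normSq ((1 + Complex.I*(b:ℝ)) - (τ:ℂ)) = ((1-τ^2)/(2*τ))^2 := by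
      rw [hns, hb2]; field_simp; ring
    rw [hns2, Real.sqrt_sq (by positivity)]
  have ha3 : ‖(τ:ℂ)*(((1/2)*(τ + 1/τ) : ℝ):ℂ) - 1‖ = (1-τ^2)/2 := by
    rw [show (τ:ℂ)*(((1/2)*(τ + 1/τ) : ℝ):ℂ) - 1 = (((τ * ((1/2)*(τ + 1/τ)) - 1 : ℝ)):ℂ) by
      push_cast; ring]
    rw [Complex.norm_real, Real.norm_eq_abs, abs_of_nonpos (by
      have h : τ * ((1/2)*(τ + 1/τ)) - 1 = -((1-τ^2)/2) := by field_simp; ring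
      rw [h]; linarith)]
    field_simp
    ring
  have ha4 : ‖(((1/2)*(τ + 1/τ) : ℝ):ℂ) - (τ:ℂ)‖ = (1-τ^2)/(2*τ) := by
    rw [show (((1/2)*(τ + 1/τ) : ℝ):ℂ) - (τ:ℂ) = ((((1/2)*(τ + 1/τ)) - τ : ℝ):ℂ) by
      push_cast; ring]
    rw [Complex.norm_real, Real.norm_eq_abs, abs_of_nonneg (by
      have h : ((1/2)*(τ + 1/τ)) - τ = (1-τ^2)/(2*τ) := by field_simp; ring
      rw [h]; positivity)]
    field_simp
    ring
  have ha1pos : (0:ℝ) < (1-τ)/2 * y := by positivity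
  have ha3pos : (0:ℝ) < (1-τ^2)/2 := by positivity
  -- key log identity
  have key : Real.log (1 + 4*(1-τ)/(1+τ))
      = 2 * (Real.log ((1-τ)/2 * y) - Real.log ((1-τ^2)/2)) := by
    have hq : (1:ℝ) + 4*(1-τ)/(1+τ) = ((1-τ)/2 * y / ((1-τ^2)/2))^2 := by
      rw [div_pow, mul_pow, hy2, show (1:ℝ)-τ^2 = (1-τ)*(1+τ) by ring]
      field_simp [hτ1.ne', hτ2.ne']
      ring
    rw [hq, ← Real.log_div ha1pos.ne' ha3pos.ne', Real.log_pow]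
    push_cast; ring
  have e1 : Ref17 τ (1 + Complex.I * (b:ℝ))
      = 4 * (τ/(1-τ^2)) * (1 + 1) + Real.log ((1-τ)/2 * y) - Real.log ((1-τ^2)/(2*τ)) := by
    unfold Ref17
    rw [ha1, ha2]
    norm_num
  have e2 : Ref17 τ (((1/2)*(τ + 1/τ) : ℝ))
      = 4 * (τ/(1-τ^2)) * ((1/2)*(τ + 1/τ) + 1)
        + Real.log ((1-τ^2)/2) - Real.log ((1-τ^2)/(2*τ)) := by
    unfold Ref17
    rw [ha3, ha4]
    norm_num
  constructor
  · rw [e1, e2, key]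
    have hlin : 4 * (τ/(1-τ^2)) * (1 + 1) - 4 * (τ/(1-τ^2)) * ((1/2)*(τ + 1/τ) + 1)
        = -2*(1-τ)/(1+τ) := by
      rw [show (1:ℝ)-τ^2 = (1-τ)*(1+τ) by ring]
      field_simp
      ring
    linarith [hlin]
  · have hu : (0:ℝ) < 4*(1-τ)/(1+τ) := by positivity
    have hlog : Real.log (1 + 4*(1-τ)/(1+τ)) < (1 + 4*(1-τ)/(1+τ)) - 1 :=
      Real.log_lt_sub_one_of_pos (by linarith) (by linarith)
    have hq : -2*(1-τ)/(1+τ) = -((1/2)*(4*(1-τ)/(1+τ))) := by ring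
    rw [hq]
    linarith
end
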